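/- Let R be a commutative Noetherian ring of prime characteristic p and let b be an ideal of R. Then the sequence ((b^{[p^n]})^F)_{n∈ℕ} of F-closures of the Frobenius powers of b is an f-sequence. -/
import Mathlib


/-- The ideal `b^{[p^n]}` generated by `p^n`-th powers of elements of `b`. -/
def FrobPow {R : Type*} [CommRing R] (p n : ℕ) (b : Ideal R) : Ideal R :=
  Ideal.span ((fun x => x ^ p ^ n) '' (b : Set R))

/-- The `F`-closure of an ideal, as a set. -/
def FClosureSet {R : Type*} [CommRing R] (p : ℕ) (b : Ideal R) : Set R :=
  {r | ∃ n : ℕ, r ^ p ^ n ∈ FrobPow p n b}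

lemma frobPow_eq_map {R : Type*} [CommRing R] (p : ℕ) [hp : Fact p.Prime] [CharP R p]
    (n : ℕ) (b : Ideal R) :
    FrobPow p n b = Ideal.map (iterateFrobenius R p n) b := by
  haveI : ExpChar R p := ExpChar.prime hp.out
  unfold FrobPow Ideal.map
  congr 1

lemma frobPow_frobPow {R : Type*} [CommRing R] (p : ℕ) [hp : Fact p.Prime] [CharP R p]
    (m n : ℕ) (b : Ideal R) :
    FrobPow p m (FrobPow p n b) = FrobPow p (m + n) b := by
  haveI : ExpChar R p := ExpChar.prime hp.out
  rw [frobPow_eq_map, frobPow_eq_map, frobPow_eq_map, Ideal.map_map]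
  congr 1
  ext x
  simp [iterateFrobenius_def, ← pow_mul, ← pow_add, Nat.add_comm]

theorem fClosure_frobeniusPowers_fSequence {R : Type*} [CommRing R] [IsNoetherianRing R]
    (p : ℕ) (hp : p.Prime) [CharP R p] (b : Ideal R) :
    ∀ (n : ℕ) (r : R),
      r ∈ FClosureSet p (FrobPow p n b) ↔ r ^ p ∈ FClosureSet p (FrobPow p (n + 1) b) := by
  haveI : Fact p.Prime := ⟨hp⟩
  haveI : ExpChar R p := ExpChar.prime hp
  intro n r
  constructor
  · rintro ⟨m, hm⟩
    refine ⟨m, ?_⟩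
    rw [frobPow_frobPow] at hm ⊢
    have := Ideal.mem_map_of_mem (frobenius R p) hm
    rw [frobPow_eq_map] at this ⊢
    rw [Ideal.map_map] at this
    have hcomp : (frobenius R p).comp (iterateFrobenius R p (m + n)) =
        iterateFrobenius R p (m + (n + 1)) := by
      ext x
      simp only [RingHom.comp_apply, iterateFrobenius_def, frobenius_def, ← pow_mul,
        ← pow_succ, Nat.add_assoc]
    rw [hcomp] at this
    have hval : frobenius R p (r ^ p ^ m) = (r ^ p) ^ p ^ m := by
      rw [frobenius_def, ← pow_mul, ← pow_mul, mul_comm]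
    rwa [hval] at this
  · rintro ⟨m, hm⟩
    refine ⟨m + 1, ?_⟩
    rw [frobPow_frobPow] at hm ⊢
    have : (r ^ p) ^ p ^ m = r ^ p ^ (m + 1) := by
      rw [← pow_mul, pow_succ, mul_comm (p ^ m) p, pow_mul]
    rw [this] at hm
    have heq : m + (n + 1) = m + 1 + n := by ring
    rwa [heq] at hm
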